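/- Consider the Markov chain on ℝ given by the transition density (for t ≥ 4 fixed, s² = t): p(μ'|μ) ∝ (1 + μ²/t)^{t/2} (1 + μ²/t + μ'²/t)^{−(t+1)/2}. Then E(μ_i² | μ_{i−1} = μ) = (t + μ²)/(t − 2), and with V(μ) := μ² + 1, J := [−a, a] for a > √(t/(t−3)), the drift condition PV(μ) ≤ λV(μ) for |μ| > a and PV(μ) ≤ K for |μ| ≤ a holds with λ = (1/(t−2))((2t−3)/(1+a²) + 1) < 1 and K = 2 + (a²+2)/(t−2). -/

import Mathlib

open MeasureTheory Real

noncomputable section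

/-- Normalizing constant of the Student-t type transition density. -/
def studentC (t : ℝ) : ℝ :=
  Real.Gamma ((t + 1) / 2) / (Real.sqrt (t * Real.pi) * Real.Gamma (t / 2))

/-- The transition density `p(μ'|μ)` of the two-step Gibbs sampler (with `s² = t`):
`p(μ'|μ) ∝ (1 + μ²/t)^{t/2} (1 + μ²/t + μ'²/t)^{−(t+1)/2}`. -/
def pdens (t μ μ' : ℝ) : ℝ :=
  studentC t * (1 + μ ^ 2 / t) ^ (t / 2) * (1 + μ ^ 2 / t + μ' ^ 2 / t) ^ (-(t + 1) / 2)

open Set in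
lemma aux_realBeta (a b : ℝ) (ha : 0 < a) (hb : 0 < b) :
    ∫ u in Set.Ioo (0:ℝ) 1, u ^ (a-1) * (1-u) ^ (b-1)
      = Real.Gamma a * Real.Gamma b / Real.Gamma (a+b) := by
  have hre : ∀ x : ℝ, 0 < x → 0 < Complex.re (x : ℂ) := by intro x hx; simpa using hx
  have h1 := Complex.Gamma_mul_Gamma_eq_betaIntegral (hre a ha) (hre b hb)
  have h2 : Complex.betaIntegral (a:ℂ) (b:ℂ)
      = ((∫ u in Set.Ioo (0:ℝ) 1, u ^ (a-1) * (1-u) ^ (b-1) : ℝ) : ℂ) := by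
    rw [Complex.betaIntegral, intervalIntegral.integral_of_le zero_le_one,
      ← MeasureTheory.integral_Ioc_eq_integral_Ioo]
    have hcast := _root_.integral_ofReal (𝕜 := ℂ) (μ := volume.restrict (Ioc (0:ℝ) 1))
      (f := fun u : ℝ => u ^ (a-1) * (1-u) ^ (b-1))
    refine Eq.trans (setIntegral_congr_fun measurableSet_Ioc ?_) hcast
    intro x hx
    simp only
    rw [show ((a:ℂ)-1) = ((a-1:ℝ):ℂ) by push_cast; ring,
      show ((b:ℂ)-1) = ((b-1:ℝ):ℂ) by push_cast; ring,
      show (1-(x:ℂ)) = ((1-x:ℝ):ℂ) by push_cast; ring,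
      ← Complex.ofReal_cpow hx.1.le,
      ← Complex.ofReal_cpow (by linarith [hx.2] : (0:ℝ) ≤ 1-x)]
    norm_cast
  rw [h2, Complex.Gamma_ofReal, Complex.Gamma_ofReal, ← Complex.ofReal_add,
    Complex.Gamma_ofReal, ← Complex.ofReal_mul, ← Complex.ofReal_mul] at h1
  have h3 := Complex.ofReal_injective h1
  have h4 : Real.Gamma (a+b) ≠ 0 := (Real.Gamma_pos_of_pos (by linarith)).ne'
  field_simp [h3]
  rw [h3]; ring

open Set in
lemma aux_integrable (s : ℝ) (hs : 1/2 < s) :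
    Integrable (fun x : ℝ => (1+x^2) ^ (-s)) := by
  have h := integrable_rpow_neg_one_add_norm_sq (E := ℝ) (μ := volume) (r := 2*s) (by simpa using by linarith)
  refine h.congr (Filter.Eventually.of_forall fun x => ?_)
  simp only [Real.norm_eq_abs, sq_abs]
  norm_num
  congr 1
  ring

open Set in
lemma aux_J_Ioi (s : ℝ) (hs : 1 < s) :
    ∫ x in Ioi (0:ℝ), (1+x^2) ^ (-s)
      = Real.Gamma (1/2) * Real.Gamma (s-1/2) / Real.Gamma s / 2 := by
  have hbeta :
      ∫ u in Set.Ioo (0:ℝ) 1, u ^ ((1:ℝ)/2-1) * (1-u) ^ ((s-1/2)-1)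
        = Real.Gamma (1/2) * Real.Gamma (s-1/2) / Real.Gamma s := by
    have := aux_realBeta (1/2) (s-1/2) (by norm_num) (by linarith)
    rwa [show (1:ℝ)/2 + (s-1/2) = s by ring] at this
  set f : ℝ → ℝ := fun x => x^2/(1+x^2) with hf
  set f' : ℝ → ℝ := fun x => 2*x/(1+x^2)^2 with hf'
  have hderiv : ∀ x ∈ Ioi (0:ℝ), HasDerivWithinAt f (f' x) (Ioi 0) x := by
    intro x hx
    have h1 : HasDerivAt (fun x : ℝ => x^2) (2*x) x := by
      simpa using (hasDerivAt_pow 2 x)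
    have h2 : HasDerivAt (fun x : ℝ => 1+x^2) (2*x) x := by
      simpa using (hasDerivAt_pow 2 x).const_add 1
    have hne : (1:ℝ)+x^2 ≠ 0 := by positivity
    have := h1.div h2 hne
    refine (HasDerivAt.hasDerivWithinAt ?_)
    convert this using 1 <;> try rfl
    simp only [hf']
    field_simp
    ring
  have hinj : InjOn f (Ioi (0:ℝ)) := by
    intro x hx y hy hxy
    simp only [hf, mem_Ioi] at hx hy hxy
    have hx1 : (1:ℝ)+x^2 ≠ 0 := by positivity
    have hy1 : (1:ℝ)+y^2 ≠ 0 := by positivity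
    field_simp at hxy
    have hsq : x^2 = y^2 := by nlinarith
    calc x = √(x^2) := (Real.sqrt_sq hx.le).symm
    _ = √(y^2) := by rw [hsq]
    _ = y := Real.sqrt_sq hy.le
  have himg : f '' (Ioi (0:ℝ)) = Ioo (0:ℝ) 1 := by
    ext u
    constructor
    · rintro ⟨x, hx, rfl⟩
      simp only [mem_Ioi] at hx
      have h1 : (0:ℝ) < 1+x^2 := by positivity
      constructor
      · positivity
      · rw [div_lt_one h1]; nlinarith
    · rintro ⟨hu0, hu1⟩
      refine ⟨Real.sqrt (u/(1-u)), ?_, ?_⟩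
      · simp only [mem_Ioi]
        apply Real.sqrt_pos.mpr
        apply div_pos hu0 (by linarith)
      · have h1 : (0:ℝ) ≤ u/(1-u) := le_of_lt (div_pos hu0 (by linarith))
        simp only [hf, Real.sq_sqrt h1]
        have h2 : (1:ℝ)-u ≠ 0 := by linarith
        field_simp
        ring
  have hcv := integral_image_eq_integral_abs_deriv_smul measurableSet_Ioi hderiv hinj
    (fun u => u ^ ((1:ℝ)/2-1) * (1-u) ^ ((s-1/2)-1))
  rw [himg] at hcv
  rw [hbeta] at hcv
  -- now hcv : Γ-expr = ∫ x in Ioi 0, |f' x| • (f x ^ ... * (1 - f x) ^ ...)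
  rw [eq_comm] at hcv
  have hpt : ∀ x ∈ Ioi (0:ℝ),
      |f' x| • ((f x) ^ ((1:ℝ)/2-1) * (1-f x) ^ ((s-1/2)-1)) = 2 * (1+x^2) ^ (-s) := by
    intro x hx
    simp only [mem_Ioi] at hx
    have hP : (0:ℝ) < 1+x^2 := by positivity
    have habs : |f' x| = 2*x/(1+x^2)^2 := by
      rw [abs_of_pos]; positivity
    have h1mf : 1 - f x = (1+x^2)⁻¹ := by
      simp only [hf]
      field_simp
      ring
    have hfx : f x = x^2 * (1+x^2)⁻¹ := by rw [hf]; ring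
    have e1 : (x^2 : ℝ) ^ ((1:ℝ)/2-1) = x⁻¹ := by
      rw [← Real.rpow_natCast x 2, ← Real.rpow_mul hx.le,
        show ((2:ℕ):ℝ)*((1:ℝ)/2-1) = -1 by norm_num, Real.rpow_neg_one]
    have e2 : ((1+x^2:ℝ)⁻¹) ^ ((1:ℝ)/2-1) = (1+x^2) ^ ((1:ℝ)/2) := by
      rw [Real.inv_rpow hP.le, ← Real.rpow_neg hP.le]; norm_num
    have e3 : ((1+x^2:ℝ)⁻¹) ^ ((s-1/2)-1) = (1+x^2) ^ ((3:ℝ)/2-s) := by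
      rw [Real.inv_rpow hP.le, ← Real.rpow_neg hP.le]; ring_nf
    have e4 : (1+x^2:ℝ) ^ ((1:ℝ)/2) * (1+x^2) ^ ((3:ℝ)/2-s) = (1+x^2)^2 * (1+x^2)^(-s) := by
      rw [← Real.rpow_add hP, show (1:ℝ)/2 + ((3:ℝ)/2-s) = 2 + -s by ring,
        Real.rpow_add hP, Real.rpow_two]
    rw [smul_eq_mul, habs, h1mf, hfx, Real.mul_rpow (by positivity) (by positivity),
      e1, e2, e3, mul_assoc (x⁻¹), e4]
    field_simp
  rw [setIntegral_congr_fun measurableSet_Ioi hpt] at hcv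
  rw [MeasureTheory.integral_const_mul] at hcv
  linarith [hcv]

open Set in
lemma aux_J (s : ℝ) (hs : 1 < s) :
    ∫ x : ℝ, (1+x^2) ^ (-s) = Real.sqrt π * Real.Gamma (s-1/2) / Real.Gamma s := by
  have hint := aux_integrable s (by linarith)
  have hsplit := intervalIntegral.integral_Iic_add_Ioi (b := (0:ℝ))
    hint.integrableOn hint.integrableOn
  have hneg : ∫ x in Iic (0:ℝ), (1+x^2) ^ (-s) = ∫ x in Ioi (0:ℝ), (1+x^2) ^ (-s) := by
    have h := _root_.integral_comp_neg_Iic (0:ℝ) (fun x => (1+x^2) ^ (-s))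
    simp only [neg_zero] at h
    rw [← h]
    refine setIntegral_congr_fun measurableSet_Iic fun x _ => ?_
    norm_num
  rw [hneg, aux_J_Ioi s hs] at hsplit
  rw [← hsplit, Real.Gamma_one_half_eq]
  ring

lemma aux_integrable_sq (s : ℝ) (hs : 2 < s) :
    Integrable (fun x : ℝ => x^2 * (1+x^2) ^ (-s)) := by
  have key : ∀ x : ℝ, x^2 * (1+x^2) ^ (-s) = (1+x^2) ^ (-(s-1)) - (1+x^2) ^ (-s) := by
    intro x
    have hP : (0:ℝ) < 1+x^2 := by positivity
    have : (1+x^2 : ℝ) ^ (-(s-1)) = (1+x^2) * (1+x^2) ^ (-s) := by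
      rw [show (-(s-1) : ℝ) = 1 + -s by ring, Real.rpow_add hP, Real.rpow_one]
    rw [this]; ring
  have := (aux_integrable (s-1) (by linarith)).sub (aux_integrable s (by linarith))
  exact this.congr (Filter.Eventually.of_forall fun x => (key x).symm)

lemma aux_Ksq (s : ℝ) (hs : 2 < s) :
    ∫ x : ℝ, x^2 * (1+x^2) ^ (-s)
      = Real.sqrt π * Real.Gamma (s-1-1/2) / Real.Gamma (s-1)
        - Real.sqrt π * Real.Gamma (s-1/2) / Real.Gamma s := by
  have key : ∀ x : ℝ, x^2 * (1+x^2) ^ (-s) = (1+x^2) ^ (-(s-1)) - (1+x^2) ^ (-s) := by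
    intro x
    have hP : (0:ℝ) < 1+x^2 := by positivity
    have : (1+x^2 : ℝ) ^ (-(s-1)) = (1+x^2) * (1+x^2) ^ (-s) := by
      rw [show (-(s-1) : ℝ) = 1 + -s by ring, Real.rpow_add hP, Real.rpow_one]
    rw [this]; ring
  calc ∫ x : ℝ, x^2 * (1+x^2) ^ (-s)
      = ∫ x : ℝ, ((1+x^2) ^ (-(s-1)) - (1+x^2) ^ (-s)) := by
        exact integral_congr_ae (Filter.Eventually.of_forall fun x => key x)
    _ = (∫ x : ℝ, (1+x^2) ^ (-(s-1))) - ∫ x : ℝ, (1+x^2) ^ (-s) :=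
        integral_sub (aux_integrable (s-1) (by linarith)) (aux_integrable s (by linarith))
    _ = _ := by rw [aux_J (s-1) (by linarith), aux_J s (by linarith)]

open Set in
lemma aux_key (t : ℝ) (ht : 4 ≤ t) (μ : ℝ) :
    (∫ μ', pdens t μ μ' = 1) ∧ (∫ μ', μ' ^ 2 * pdens t μ μ' = (t + μ ^ 2) / (t - 2))
    ∧ Integrable (pdens t μ) ∧ Integrable (fun μ' => μ' ^ 2 * pdens t μ μ') := by
  have ht0 : (0:ℝ) < t := by linarith
  set s : ℝ := (t+1)/2 with hsdef
  have hs2 : 2 < s := by rw [hsdef]; linarith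
  set b : ℝ := 1 + μ^2/t with hbdef
  have hb : 0 < b := by rw [hbdef]; positivity
  set c : ℝ := Real.sqrt (t + μ^2) with hcdef
  have htμ : 0 < t + μ^2 := by positivity
  have hc : 0 < c := Real.sqrt_pos.mpr htμ
  have hc2 : c^2 = t * b := by
    rw [hcdef, Real.sq_sqrt htμ.le, hbdef]; field_simp
  set A : ℝ := studentC t * b ^ (t/2) * b ^ (-s) with hAdef
  -- pointwise factorization
  have hpt : ∀ y : ℝ, pdens t μ y = A * (fun z : ℝ => (1+z^2) ^ (-s)) (y / c) := by
    intro y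
    simp only
    rw [pdens, hAdef]
    have hc2' : c^2 = t + μ^2 := by rw [hcdef, Real.sq_sqrt htμ.le]
    have h1 : 1 + μ^2/t + y^2/t = b * (1 + (y/c)^2) := by
      rw [hbdef, div_pow, hc2']
      field_simp
    have h2 : (-(t+1)/2 : ℝ) = -s := by rw [hsdef]; ring
    rw [h1, h2, Real.mul_rpow hb.le (by positivity)]
    ring
  have hptsq : ∀ y : ℝ, y^2 * pdens t μ y
      = (A * c^2) * (fun z : ℝ => z^2 * (1+z^2) ^ (-s)) (y / c) := by
    intro y
    rw [hpt y]
    simp only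
    field_simp
  -- integrability
  have hint1 : Integrable (pdens t μ) := by
    have := ((aux_integrable s (by linarith)).comp_div hc.ne').const_mul A
    exact this.congr (Filter.Eventually.of_forall fun y => (hpt y).symm)
  have hint2 : Integrable (fun μ' => μ' ^ 2 * pdens t μ μ') := by
    have := ((aux_integrable_sq s hs2).comp_div hc.ne').const_mul (A * c^2)
    exact this.congr (Filter.Eventually.of_forall fun y => (hptsq y).symm)
  -- Gamma bookkeeping
  have hG1pos : 0 < Real.Gamma (t/2-1) := Real.Gamma_pos_of_pos (by linarith)
  have hG2pos : 0 < Real.Gamma ((t-1)/2) := Real.Gamma_pos_of_pos (by linarith)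
  have hG1 : Real.Gamma (t/2) = (t/2-1) * Real.Gamma (t/2-1) := by
    have h := Real.Gamma_add_one (s := t/2-1) (by intro h; nlinarith)
    rw [sub_add_cancel] at h
    exact h
  have hG2 : Real.Gamma ((t+1)/2) = ((t-1)/2) * Real.Gamma ((t-1)/2) := by
    have h := Real.Gamma_add_one (s := (t-1)/2) (by intro h; nlinarith)
    rw [show (t-1)/2+1 = (t+1)/2 by ring] at h
    exact h
  -- sqrt bookkeeping
  have hsqtpi : Real.sqrt (t*π) = Real.sqrt t * Real.sqrt π := Real.sqrt_mul ht0.le π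
  have hsqt : (0:ℝ) < Real.sqrt t := Real.sqrt_pos.mpr ht0
  have hsqb : (0:ℝ) < Real.sqrt b := Real.sqrt_pos.mpr hb
  have hsqpi : (0:ℝ) < Real.sqrt π := Real.sqrt_pos.mpr Real.pi_pos
  have hcsplit : c = Real.sqrt t * Real.sqrt b := by
    rw [hcdef, ← Real.sqrt_mul ht0.le, ← hc2, hcdef, Real.sq_sqrt htμ.le]
  have hbexp : b ^ (t/2) * b ^ (-s) = (Real.sqrt b)⁻¹ := by
    rw [← Real.rpow_add hb, show t/2 + -s = -(1/2) by rw [hsdef]; ring,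
      Real.rpow_neg hb.le, Real.sqrt_eq_rpow]
  -- the J and K values with s = (t+1)/2
  have hJval : ∫ x : ℝ, (1+x^2) ^ (-s)
      = Real.sqrt π * ((t/2-1) * Real.Gamma (t/2-1)) / (((t-1)/2) * Real.Gamma ((t-1)/2)) := by
    rw [aux_J s (by linarith), show s - 1/2 = t/2 by rw [hsdef]; ring, hG1,
      show s = (t+1)/2 from hsdef, hG2]
  have hKval : ∫ x : ℝ, x^2 * (1+x^2) ^ (-s)
      = Real.sqrt π * Real.Gamma (t/2-1) / Real.Gamma ((t-1)/2)
        - Real.sqrt π * ((t/2-1) * Real.Gamma (t/2-1)) / (((t-1)/2) * Real.Gamma ((t-1)/2)) := by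
    rw [aux_Ksq s hs2, show s - 1 - 1/2 = t/2-1 by rw [hsdef]; ring,
      show s - 1 = (t-1)/2 by rw [hsdef]; ring,
      show s - 1/2 = t/2 by rw [hsdef]; ring, hG1, show s = (t+1)/2 from hsdef, hG2]
  have hC : studentC t = ((t-1)/2) * Real.Gamma ((t-1)/2)
      / (Real.sqrt t * Real.sqrt π * ((t/2-1) * Real.Gamma (t/2-1))) := by
    rw [studentC, hG1, hG2, hsqtpi]
  have h21 : (0:ℝ) < t/2 - 1 := by linarith
  have h22 : (0:ℝ) < (t-1)/2 := by linarith
  have htb : t + μ^2 = t * b := by rw [hbdef]; field_simp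
  clear_value s b c
  constructor
  · -- normalization
    calc ∫ μ', pdens t μ μ'
        = ∫ μ', A * (fun z : ℝ => (1+z^2) ^ (-s)) (μ' / c) := by
          exact integral_congr_ae (Filter.Eventually.of_forall hpt)
      _ = A * ∫ μ', (fun z : ℝ => (1+z^2) ^ (-s)) (μ' / c) := integral_const_mul _ _
      _ = A * (|c| • ∫ z : ℝ, (1+z^2) ^ (-s)) := by
          rw [MeasureTheory.Measure.integral_comp_div (fun z : ℝ => (1+z^2) ^ (-s)) c]
      _ = 1 := by
          rw [abs_of_pos hc, smul_eq_mul, hJval, hAdef, mul_assoc (studentC t), hbexp, hC,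
            hcsplit]
          set G1 := Real.Gamma (t/2-1) with hG1'
          set G2 := Real.Gamma ((t-1)/2) with hG2'
          set st := Real.sqrt t with hst'
          set sb := Real.sqrt b with hsb'
          set sp := Real.sqrt π with hsp'
          set u := t/2 - 1 with hu'
          set v := (t-1)/2 with hv'
          field_simp [hsqt.ne', hsqb.ne', hsqpi.ne', hG1pos.ne', hG2pos.ne', h21.ne', h22.ne']
  refine ⟨?_, hint1, hint2⟩
  calc ∫ μ', μ' ^ 2 * pdens t μ μ'
      = ∫ μ', (A * c^2) * (fun z : ℝ => z^2 * (1+z^2) ^ (-s)) (μ' / c) := by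
        exact integral_congr_ae (Filter.Eventually.of_forall hptsq)
    _ = (A * c^2) * ∫ μ', (fun z : ℝ => z^2 * (1+z^2) ^ (-s)) (μ' / c) := integral_const_mul _ _
    _ = (A * c^2) * (|c| • ∫ z : ℝ, z^2 * (1+z^2) ^ (-s)) := by
        rw [MeasureTheory.Measure.integral_comp_div (fun z : ℝ => z^2 * (1+z^2) ^ (-s)) c]
    _ = (t + μ ^ 2) / (t - 2) := by
        rw [abs_of_pos hc, smul_eq_mul, hKval, hAdef, mul_assoc (studentC t), hbexp, hC,
          hc2, hcsplit, htb]
        have ht2ne : (t:ℝ) - 2 ≠ 0 := by intro h; nlinarith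
        set G1 := Real.Gamma (t/2-1) with hG1'
        set G2 := Real.Gamma ((t-1)/2) with hG2'
        set st := Real.sqrt t with hst'
        set sb := Real.sqrt b with hsb'
        set sp := Real.sqrt π with hsp'
        set u := t/2 - 1 with hu'
        set v := (t-1)/2 with hv'
        field_simp [hsqt.ne', hsqb.ne', hsqpi.ne', hG1pos.ne', hG2pos.ne', h21.ne', h22.ne',
          ht0.ne', ht2ne]
        rw [hu', hv']
        ring

/-- **Drift condition for the Student-t Gibbs sampler (Proposition 6.1).** For
`t ≥ 4` and `s² = t`, the chain with transition density `p(μ'|μ)` satisfies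
`E(μ_i² | μ_{i−1} = μ) = (t + μ²)/(t − 2)`, and with `V(μ) = μ² + 1`,
`J = [−a, a]`, `a > √(t/(t−3))`, the geometric drift condition holds with
`λ = (1/(t−2))((2t−3)/(1+a²) + 1) < 1` and `K = 2 + (a²+2)/(t−2)`. -/
theorem student_gibbs_drift (t a : ℝ) (ht : 4 ≤ t)
    (ha : Real.sqrt (t / (t - 3)) < a) :
    (∀ μ : ℝ, ∫ μ', μ' ^ 2 * pdens t μ μ' = (t + μ ^ 2) / (t - 2))
    ∧ (1 / (t - 2)) * ((2 * t - 3) / (1 + a ^ 2) + 1) < 1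
    ∧ (∀ μ : ℝ, a < |μ| →
        ∫ μ', (μ' ^ 2 + 1) * pdens t μ μ'
          ≤ ((1 / (t - 2)) * ((2 * t - 3) / (1 + a ^ 2) + 1)) * (μ ^ 2 + 1))
    ∧ (∀ μ : ℝ, |μ| ≤ a →
        ∫ μ', (μ' ^ 2 + 1) * pdens t μ μ' ≤ 2 + (a ^ 2 + 2) / (t - 2)) := by
  have ht2 : (0:ℝ) < t - 2 := by linarith
  have ht3 : (0:ℝ) < t - 3 := by linarith
  have h1a : (0:ℝ) < 1 + a^2 := by positivity
  have ha0 : 0 ≤ a := le_trans (Real.sqrt_nonneg _) ha.le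
  have ha2 : t/(t-3) < a^2 := by
    have h0 : (0:ℝ) ≤ t/(t-3) := by positivity
    have h := mul_self_lt_mul_self (Real.sqrt_nonneg (t/(t-3))) ha
    rw [Real.mul_self_sqrt h0] at h
    nlinarith
  have hta : t < a^2 * (t-3) := (div_lt_iff₀ ht3).mp ha2
  have hEsum : ∀ μ : ℝ, ∫ μ', (μ' ^ 2 + 1) * pdens t μ μ'
      = (t + μ ^ 2) / (t - 2) + 1 := by
    intro μ
    obtain ⟨hnorm, hmom, hint1, hint2⟩ := aux_key t ht μ
    have : ∀ μ' : ℝ, (μ' ^ 2 + 1) * pdens t μ μ'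
        = μ' ^ 2 * pdens t μ μ' + pdens t μ μ' := fun μ' => by ring
    rw [integral_congr_ae (Filter.Eventually.of_forall this),
      integral_add hint2 hint1, hmom, hnorm]
  refine ⟨fun μ => (aux_key t ht μ).2.1, ?_, ?_, ?_⟩
  · have h2 : (2*t-3)/(1+a^2) < t-3 := by
      rw [div_lt_iff₀ h1a]; nlinarith
    rw [show (1/(t-2))*((2*t-3)/(1+a^2)+1) = ((2*t-3)/(1+a^2)+1)/(t-2) by ring,
      div_lt_one ht2]
    linarith
  · intro μ hμ
    have hμ2 : a^2 < μ^2 := by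
      have h := mul_self_lt_mul_self ha0 hμ
      rw [abs_mul_abs_self] at h
      nlinarith
    rw [hEsum μ]
    have key2 : ((1/(t-2))*((2*t-3)/(1+a^2)+1))*(μ^2+1) - ((t+μ^2)/(t-2)+1)
        = (2*t-3)*(μ^2-a^2)/((t-2)*(1+a^2)) := by
      field_simp
      ring
    have hpos : 0 ≤ (2*t-3)*(μ^2-a^2)/((t-2)*(1+a^2)) := by
      apply div_nonneg
      · nlinarith
      · positivity
    nlinarith [key2, hpos]
  · intro μ hμ
    have hμ2 : μ^2 ≤ a^2 := by
      have h := mul_self_le_mul_self (abs_nonneg μ) hμ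
      rw [abs_mul_abs_self] at h
      nlinarith
    rw [hEsum μ]
    have key2 : (2+(a^2+2)/(t-2)) - ((t+μ^2)/(t-2)+1) = (a^2-μ^2)/(t-2) := by
      field_simp
      ring
    have hpos : 0 ≤ (a^2-μ^2)/(t-2) := by
      apply div_nonneg (by nlinarith) ht2.le
    nlinarith [key2, hpos]


end
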